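/- Consider the scalar case (n_i = 1 for all blocks, N = n), let f be convex with Lipschitz continuous gradient (global constant L_f), assume the set of basic local minimizers 𝒯_f is finite, and fix β_i > 0. For the exact approximation u_i(y_i;x) = f(x + U_i(y_i − x_i)) + (β_i/2)|y_i − x_i|², define h_i(x) = argmin_{y_i ∈ ℝ} u_i(y_i;x), v^i(x) = x + U_i(h_i(x) − x_i), and Δ^i(x) = f(x − U_i x_i) + (β_i/2)|x_i|² − f(v^i(x)) − (β_i/2)|(v^i(x))_i − x_i|². Then for all x ∈ ℝⁿ and all z ∈ 𝒯_f: |Δ^i(x) − Δ^i(z)| ≤ γ^i ‖x − z‖ + ((L_f + β_i)/2)‖x − z‖², where γ^i = max{ ‖∇f(y − U_i y_i)‖ + ‖∇f(v^i(y))‖ + β_i|y_i| : y ∈ 𝒯_f }. -/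

import Mathlib

open Finset

section Helpers14
open scoped RealInnerProductSpace
open Filter Set Topology

variable {E : Type*} [NormedAddCommGroup E] [InnerProductSpace ℝ E] [CompleteSpace E]
variable {f : E → ℝ} {g : E → E}

lemma line_hasDerivAt (hgrad : ∀ x, HasGradientAt f (g x) x) (a d : E) (t : ℝ) :
    HasDerivAt (fun s : ℝ => f (a + s • d)) ⟪g (a + t • d), d⟫ t := by
  have hc : HasDerivAt (fun s : ℝ => a + s • d) d t := by
    simpa using ((hasDerivAt_id t).smul_const d).const_add a
  have hf := (hasGradientAt_iff_hasFDerivAt.1 (hgrad (a + t • d)))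
  have h := hf.comp_hasDerivAt t hc
  simp only [InnerProductSpace.toDual_apply_apply] at h
  exact h

lemma convex_grad_lb (hconv : ConvexOn ℝ Set.univ f)
    (hgrad : ∀ x, HasGradientAt f (g x) x) (a b : E) :
    f a + ⟪g a, b - a⟫ ≤ f b := by
  set d := b - a with hd
  have h0 : HasDerivAt (fun s : ℝ => f (a + s • d)) ⟪g a, d⟫ 0 := by
    simpa using line_hasDerivAt hgrad a d 0
  have hslope : Tendsto (slope (fun s : ℝ => f (a + s • d)) 0) (𝓝[>] 0) (𝓝 ⟪g a, d⟫) :=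
    (hasDerivAt_iff_tendsto_slope.1 h0).mono_left
      (nhdsWithin_mono _ (fun t ht => ne_of_gt ht))
  have hbound : ∀ᶠ t in 𝓝[>] (0:ℝ),
      slope (fun s : ℝ => f (a + s • d)) 0 t ≤ f b - f a := by
    filter_upwards [Ioo_mem_nhdsGT_of_mem (left_mem_Ico.2 one_pos)] with t ht
    have hpt : a + t • d = (1 - t) • a + t • b := by
      rw [hd, smul_sub, sub_smul, one_smul]; abel
    have hcv := hconv.2 (mem_univ a) (mem_univ b) (by linarith [ht.2] : (0:ℝ) ≤ 1 - t)
      ht.1.le (by ring)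
    rw [← hpt] at hcv
    have : f (a + t • d) - f (a + (0:ℝ) • d) ≤ t * (f b - f a) := by
      simp only [zero_smul, add_zero]
      simp only [smul_eq_mul] at hcv
      nlinarith [hcv]
    rw [slope_def_field]
    simp only [sub_zero]
    rw [div_le_iff₀ ht.1]
    simpa [mul_comm] using this
  have := le_of_tendsto hslope hbound
  linarith

lemma descent_lemma (hgrad : ∀ x, HasGradientAt f (g x) x)
    {Lf : ℝ} (hLf : ∀ x y, ‖g x - g y‖ ≤ Lf * ‖x - y‖) (a b : E) :
    f b ≤ f a + ⟪g a, b - a⟫ + Lf / 2 * ‖b - a‖ ^ 2 := by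
  set d := b - a with hd
  set ψ : ℝ → ℝ := fun s => f (a + s • d) - s * ⟪g a, d⟫ - s ^ 2 * (Lf / 2 * ‖d‖ ^ 2) with hψdef
  have hψ : ∀ t : ℝ, HasDerivAt ψ
      (⟪g (a + t • d), d⟫ - ⟪g a, d⟫ - 2 * t * (Lf / 2 * ‖d‖ ^ 2)) t := by
    intro t
    have h1 := line_hasDerivAt hgrad a d t
    have h2 : HasDerivAt (fun s : ℝ => s * ⟪g a, d⟫) ⟪g a, d⟫ t := by
      simpa using (hasDerivAt_id t).mul_const ⟪g a, d⟫
    have h3 : HasDerivAt (fun s : ℝ => s ^ 2 * (Lf / 2 * ‖d‖ ^ 2))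
        (2 * t * (Lf / 2 * ‖d‖ ^ 2)) t := by
      simpa using (hasDerivAt_pow 2 t).mul_const (Lf / 2 * ‖d‖ ^ 2)
    exact (h1.sub h2).sub h3
  have hdiff : Differentiable ℝ ψ := fun t => (hψ t).differentiableAt
  have hanti : AntitoneOn ψ (Icc 0 1) := by
    apply antitoneOn_of_deriv_nonpos (convex_Icc 0 1) hdiff.continuous.continuousOn
      hdiff.differentiableOn
    intro t ht
    rw [interior_Icc] at ht
    rw [(hψ t).deriv]
    have key : ⟪g (a + t • d), d⟫ - ⟪g a, d⟫ ≤ Lf * t * ‖d‖ ^ 2 := by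
      have h1 : ⟪g (a + t • d) - g a, d⟫ ≤ ‖g (a + t • d) - g a‖ * ‖d‖ :=
        real_inner_le_norm _ _
      have h2 : ‖g (a + t • d) - g a‖ ≤ Lf * ‖t • d‖ := by
        simpa using hLf (a + t • d) a
      have h3 : ‖t • d‖ = t * ‖d‖ := by
        rw [norm_smul]; simp [abs_of_pos ht.1]
      rw [inner_sub_left] at h1
      have h4 : ‖g (a + t • d) - g a‖ * ‖d‖ ≤ Lf * ‖t • d‖ * ‖d‖ :=
        mul_le_mul_of_nonneg_right h2 (norm_nonneg d)
      rw [h3] at h4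
      nlinarith [h1, h4]
    nlinarith [key]
  have := hanti (left_mem_Icc.2 zero_le_one) (right_mem_Icc.2 zero_le_one) zero_le_one
  have h0 : ψ 0 = f a := by simp [hψdef]
  have h1 : ψ 1 = f b - ⟪g a, d⟫ - Lf / 2 * ‖d‖ ^ 2 := by
    simp [hψdef, hd]
  rw [h0, h1] at this
  linarith

end Helpers14

open scoped RealInnerProductSpace


/-- The set of basic local minimizers `𝒯_f = {z : ∇ⱼf(z) = 0 for all j ∈ I(z)}` in the
scalar case, where `I(z) = supp(z) ∪ {j : λⱼ = 0}`. -/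
def basicLocalMin {n : ℕ} (lam : Fin n → ℝ)
    (g : EuclideanSpace ℝ (Fin n) → EuclideanSpace ℝ (Fin n)) :
    Set (EuclideanSpace ℝ (Fin n)) :=
  {z | ∀ j, (z j ≠ 0 ∨ lam j = 0) → g z j = 0}

set_option maxHeartbeats 2000000 in
/-- In the scalar case, for the exact approximation
`uᵢ(yᵢ;x) = f(x + Uᵢ(yᵢ - xᵢ)) + (βᵢ/2)|yᵢ - xᵢ|²` with associated exact coordinate
minimizer `hᵢ(x)`, `vⁱ(x) = x + Uᵢ(hᵢ(x) - xᵢ)` and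
`Δⁱ(x) = f(x - Uᵢxᵢ) + (βᵢ/2)|xᵢ|² - f(vⁱ(x)) - (βᵢ/2)|(vⁱ(x))ᵢ - xᵢ|²`, one has for all
`x` and all `z ∈ 𝒯_f`: `|Δⁱ(x) - Δⁱ(z)| ≤ γⁱ‖x-z‖ + ((L_f+βᵢ)/2)‖x-z‖²`. -/
theorem statement14 {n : ℕ} (lam : Fin n → ℝ) (hlam : ∀ i, 0 ≤ lam i)
    (f : EuclideanSpace ℝ (Fin n) → ℝ)
    (g : EuclideanSpace ℝ (Fin n) → EuclideanSpace ℝ (Fin n))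
    (hconv : ConvexOn ℝ Set.univ f)
    (hgrad : ∀ x, HasGradientAt f (g x) x)
    (Lf : ℝ) (hLf : ∀ x y, ‖g x - g y‖ ≤ Lf * ‖x - y‖)
    (hTf : (basicLocalMin lam g).Finite)
    (β : Fin n → ℝ) (hβ : ∀ i, 0 < β i)
    -- the exact coordinate minimizer `hᵢ(x)`
    (hmin : Fin n → EuclideanSpace ℝ (Fin n) → ℝ)
    (hhmin : ∀ (i : Fin n) (x : EuclideanSpace ℝ (Fin n)) (y : ℝ),
      f (x + EuclideanSpace.single i (hmin i x - x i)) + β i / 2 * (hmin i x - x i) ^ 2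
        ≤ f (x + EuclideanSpace.single i (y - x i)) + β i / 2 * (y - x i) ^ 2)
    (v : Fin n → EuclideanSpace ℝ (Fin n) → EuclideanSpace ℝ (Fin n))
    (hv : ∀ i x, v i x = x + EuclideanSpace.single i (hmin i x - x i))
    (Δ : Fin n → EuclideanSpace ℝ (Fin n) → ℝ)
    (hΔ : ∀ i x, Δ i x = f (x - EuclideanSpace.single i (x i)) + β i / 2 * (x i) ^ 2
      - f (v i x) - β i / 2 * ((v i x) i - x i) ^ 2)
    (γ : Fin n → ℝ)
    (hγ : ∀ i, γ i = sSup {t : ℝ | ∃ y ∈ basicLocalMin lam g,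
      t = ‖g (y - EuclideanSpace.single i (y i))‖ + ‖g (v i y)‖ + β i * |y i|}) :
    ∀ (i : Fin n) (x : EuclideanSpace ℝ (Fin n)),
      ∀ z ∈ basicLocalMin lam g,
        |Δ i x - Δ i z| ≤ γ i * ‖x - z‖ + (Lf + β i) / 2 * ‖x - z‖ ^ 2 := by
  intro i x z hz
  have hβi : (0:ℝ) < β i := hβ i
  -- Lf is nonnegative
  have hL : (0:ℝ) ≤ Lf := by
    have h1 := hLf 0 (EuclideanSpace.single i (1:ℝ))
    have h2 : ‖(0 : EuclideanSpace ℝ (Fin n)) - EuclideanSpace.single i (1:ℝ)‖ = 1 := by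
      simp
    rw [h2, mul_one] at h1
    exact le_trans (norm_nonneg _) h1
  -- key affine reparametrization
  have key : ∀ (p : EuclideanSpace ℝ (Fin n)) (s : ℝ),
      p + EuclideanSpace.single i (s - p i)
        = (p - EuclideanSpace.single i (p i)) + s • EuclideanSpace.single i (1:ℝ) := by
    intro p s
    ext j
    by_cases hj : j = i <;> simp [hj, EuclideanSpace.single_apply] <;> ring
  set e : EuclideanSpace ℝ (Fin n) := EuclideanSpace.single i (1:ℝ) with he
  set wx : EuclideanSpace ℝ (Fin n) := x - EuclideanSpace.single i (x i) with hwx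
  set wz : EuclideanSpace ℝ (Fin n) := z - EuclideanSpace.single i (z i) with hwz
  set hx : ℝ := hmin i x with hhx
  set hzz : ℝ := hmin i z with hhzz
  -- components of v
  have hvxi : (v i x) i = hx := by rw [hv]; simp [EuclideanSpace.single_apply]; rfl
  have hvzi : (v i z) i = hzz := by rw [hv]; simp [EuclideanSpace.single_apply]; rfl
  have hvz' : v i z = wz + hzz • e := by rw [hv]; exact key z hzz
  -- first order condition at z
  have hfoc : g (v i z) i = -(β i * (hzz - z i)) := by
    have hψmin : IsLocalMin (fun s : ℝ => f (wz + s • e) + β i / 2 * (s - z i) ^ 2) hzz := by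
      apply Filter.Eventually.of_forall
      intro y
      have h := hhmin i z y
      rw [key z (hmin i z), key z y] at h
      exact h
    have h1 := line_hasDerivAt hgrad wz e hzz
    have h2 : HasDerivAt (fun s : ℝ => β i / 2 * (s - z i) ^ 2)
        (β i / 2 * (2 * (hzz - z i))) hzz := by
      have := (((hasDerivAt_id hzz).sub_const (z i)).pow 2).const_mul (β i / 2)
      simpa using this
    have hψd := h1.add h2
    have hz0 := hψmin.hasDerivAt_eq_zero hψd
    rw [← hvz'] at hz0
    have hinner : ⟪g (v i z), e⟫ = g (v i z) i := by
      rw [he, EuclideanSpace.inner_single_right]; simp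
    rw [hinner] at hz0
    linarith
  -- the γ bound
  have hγb : ‖g wz‖ + ‖g (v i z)‖ + β i * |z i| ≤ γ i := by
    rw [hγ]
    apply le_csSup
    · apply Set.Finite.bddAbove
      apply Set.Finite.subset (hTf.image
        (fun y => ‖g (y - EuclideanSpace.single i (y i))‖ + ‖g (v i y)‖ + β i * |y i|))
      rintro t ⟨y, hy, rfl⟩
      exact ⟨y, hy, rfl⟩
    · exact ⟨z, hz, rfl⟩
  -- orthogonal decomposition
  have hsum : x - z = (wx - wz) + EuclideanSpace.single i (x i - z i) := by
    rw [hwx, hwz]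
    ext j
    by_cases hj : j = i <;> simp [hj, EuclideanSpace.single_apply] <;> ring
  have hwi : (wx - wz) i = 0 := by
    rw [hwx, hwz]; simp [EuclideanSpace.single_apply]
  have hio : ⟪wx - wz, EuclideanSpace.single i (x i - z i)⟫ = 0 := by
    rw [EuclideanSpace.inner_single_right, hwi]; simp
  have hdecomp : ‖x - z‖ ^ 2 = ‖wx - wz‖ ^ 2 + (x i - z i) ^ 2 := by
    rw [hsum, norm_add_sq_real, hio, EuclideanSpace.norm_single]
    rw [Real.norm_eq_abs, sq_abs]; ring
  have h1le : ‖wx - wz‖ ≤ ‖x - z‖ := by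
    nlinarith [norm_nonneg (wx - wz), norm_nonneg (x - z), sq_nonneg (x i - z i)]
  have h2le : |x i - z i| ≤ ‖x - z‖ := by
    nlinarith [abs_nonneg (x i - z i), norm_nonneg (x - z), sq_abs (x i - z i),
      sq_nonneg ‖wx - wz‖]
  -- Cauchy-Schwarz style bounds
  have hcs1 : |⟪g wz, wx - wz⟫| ≤ ‖g wz‖ * ‖x - z‖ :=
    le_trans (abs_real_inner_le_norm _ _) (mul_le_mul_of_nonneg_left h1le (norm_nonneg _))
  have hcs2 : |⟪g (v i z), x - z⟫| ≤ ‖g (v i z)‖ * ‖x - z‖ := abs_real_inner_le_norm _ _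
  have hcz : |z i * (x i - z i)| ≤ |z i| * ‖x - z‖ := by
    rw [abs_mul]; exact mul_le_mul_of_nonneg_left h2le (abs_nonneg _)
  have czi' : β i * (z i * (x i - z i)) ≤ β i * (|z i| * ‖x - z‖) :=
    mul_le_mul_of_nonneg_left ((le_abs_self _).trans hcz) hβi.le
  have czi'' : -(β i * (z i * (x i - z i))) ≤ β i * (|z i| * ‖x - z‖) := by
    have := mul_le_mul_of_nonneg_left (by linarith [(abs_le.1 hcz).1] :
      -(z i * (x i - z i)) ≤ |z i| * ‖x - z‖) hβi.le
    linarith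
  -- quadratic combination
  have quad : Lf / 2 * ‖wx - wz‖ ^ 2 + β i / 2 * (x i - z i) ^ 2
      ≤ (Lf + β i) / 2 * ‖x - z‖ ^ 2 := by
    have heq : (Lf + β i) / 2 * ‖x - z‖ ^ 2 = Lf / 2 * ‖wx - wz‖ ^ 2
        + β i / 2 * (x i - z i) ^ 2
        + (Lf / 2 * (x i - z i) ^ 2 + β i / 2 * ‖wx - wz‖ ^ 2) := by
      rw [hdecomp]; ring
    have n1 : 0 ≤ Lf / 2 * (x i - z i) ^ 2 :=
      mul_nonneg (by linarith) (sq_nonneg _)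
    have n2 : 0 ≤ β i / 2 * ‖wx - wz‖ ^ 2 :=
      mul_nonneg (by linarith) (sq_nonneg _)
    linarith
  -- main four inequalities
  have dA1 := descent_lemma hgrad hLf wz wx
  have dB1 := convex_grad_lb hconv hgrad wz wx
  have dA2 := convex_grad_lb hconv hgrad (v i z) (v i x)
  have hvxz : v i x - v i z = (x - z)
      + EuclideanSpace.single i ((hx - x i) - (hzz - z i)) := by
    rw [hv i x, hv i z]
    ext j
    by_cases hj : j = i <;> simp [hj, EuclideanSpace.single_apply] <;> ring
  have dA2' : ⟪g (v i z), v i x - v i z⟫ = ⟪g (v i z), x - z⟫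
      + g (v i z) i * ((hx - x i) - (hzz - z i)) := by
    rw [hvxz, inner_add_right, EuclideanSpace.inner_single_right]
    simp [mul_comm]
  rw [dA2'] at dA2
  rw [hfoc] at dA2
  -- candidate inequality for direction B
  have harg : x + EuclideanSpace.single i (hzz - z i) = v i z + (x - z) := by
    rw [hv]
    ext j
    by_cases hj : j = i <;> simp [hj, EuclideanSpace.single_apply] <;> ring
  have hcand : f (v i x) + β i / 2 * (hx - x i) ^ 2
      ≤ f (v i z + (x - z)) + β i / 2 * (hzz - z i) ^ 2 := by
    have h := hhmin i x (hzz - z i + x i)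
    simp only [add_sub_cancel_right] at h
    rw [harg] at h
    rw [← hv i x] at h
    exact h
  have dB2 : f (v i z + (x - z)) ≤ f (v i z) + ⟪g (v i z), x - z⟫
      + Lf / 2 * ‖x - z‖ ^ 2 := by
    have h := descent_lemma hgrad hLf (v i z) (v i z + (x - z))
    rw [add_sub_cancel_left] at h
    exact h
  -- Δ expressions
  have hΔx : Δ i x = f wx + β i / 2 * (x i) ^ 2
      - (f (v i x) + β i / 2 * (hx - x i) ^ 2) := by
    rw [hΔ, hvxi]; ring
  have hΔz : Δ i z = f wz + β i / 2 * (z i) ^ 2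
      - (f (v i z) + β i / 2 * (hzz - z i) ^ 2) := by
    rw [hΔ, hvzi]; ring
  have hγmul : (‖g wz‖ + ‖g (v i z)‖ + β i * |z i|) * ‖x - z‖ ≤ γ i * ‖x - z‖ :=
    mul_le_mul_of_nonneg_right hγb (norm_nonneg _)
  have hsqd : 0 ≤ β i / 2 * ((hx - x i) - (hzz - z i)) ^ 2 :=
    mul_nonneg (by linarith) (sq_nonneg _)
  have habs1 := abs_le.1 hcs1
  have habs2 := abs_le.1 hcs2
  rw [hΔx, hΔz, abs_sub_le_iff]
  constructor
  · nlinarith [dA1, dA2, quad, czi', hγmul, habs1.2, habs2.1, hsqd]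
  · nlinarith [dB1, hcand, dB2, czi'', hγmul, habs1.1, habs2.2,
      mul_nonneg hβi.le (sq_nonneg (x i - z i)), sq_nonneg ‖x - z‖,
      mul_nonneg hβi.le (sq_nonneg ‖x - z‖)]
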